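/- Let A⁺, A⁻ : ℝ → ℝ and u⁺, u⁻, û, c ∈ ℝ. Assume the Rankine–Hugoniot condition A⁺(u⁺) = A⁻(u⁻) and that the Kruzkov entropy inequality holds at c. Then: (v) if û ≤ u⁺ < c < u⁻, then A⁻(c) ≤ A⁻(u⁻) (equivalently, by the Rankine–Hugoniot condition, A⁻(c) ≤ A⁺(u⁺)); (vi) if û < c < u⁺ ≤ u⁻, then A⁻(c) ≤ A⁺(c). -/
import Mathlib


open MeasureTheory Filter Set

/-- The Kruzkov entropy inequality at `c` for data `(um, up, uh)`:
`A⁺(u⁺)·sign(u⁺−c) − 2·sign(u⁺−û)·A⁺(c)·𝟙_{(û,u⁺)}(c) ≤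
 A⁻(u⁻)·sign(u⁻−c) − 2·sign(u⁻−û)·A⁻(c)·𝟙_{(û,u⁻)}(c)`. -/
def KruzkovIneq (Ap Am : ℝ → ℝ) (um up uh c : ℝ) : Prop :=
  Ap up * Real.sign (up - c) -
      2 * Real.sign (up - uh) * Ap c * Set.indicator (Set.uIoo uh up) (1 : ℝ → ℝ) c
    ≤ Am um * Real.sign (um - c) -
      2 * Real.sign (um - uh) * Am c * Set.indicator (Set.uIoo uh um) (1 : ℝ → ℝ) c

theorem stmt_11 (Ap Am : ℝ → ℝ) (up um uh c : ℝ)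
    (hRH : Ap up = Am um)
    (hkruz : KruzkovIneq Ap Am um up uh c) :
    (uh ≤ up → up < c → c < um → Am c ≤ Am um ∧ Am c ≤ Ap up) ∧
    (uh < c → c < up → up ≤ um → Am c ≤ Ap c) := by
  unfold KruzkovIneq at hkruz
  constructor
  · intro h1 h2 h3
    have hmem : c ∈ Set.uIoo uh um := Set.mem_uIoo_of_lt (lt_of_le_of_lt h1 h2) h3
    have hnot : c ∉ Set.uIoo uh up := by
      rw [Set.uIoo_of_le h1]; intro hc; exact absurd hc.2 (not_lt.2 h2.le)
    rw [Set.indicator_of_mem hmem, Set.indicator_of_notMem hnot,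
      Real.sign_of_neg (by linarith : up - c < 0),
      Real.sign_of_pos (by linarith : (0:ℝ) < um - c),
      Real.sign_of_pos (by linarith : (0:ℝ) < um - uh), Pi.one_apply] at hkruz
    constructor <;> nlinarith [hkruz]
  · intro h1 h2 h3
    have hmem1 : c ∈ Set.uIoo uh up := Set.mem_uIoo_of_lt h1 h2
    have hmem2 : c ∈ Set.uIoo uh um := Set.mem_uIoo_of_lt h1 (lt_of_lt_of_le h2 h3)
    rw [Set.indicator_of_mem hmem1, Set.indicator_of_mem hmem2,
      Real.sign_of_pos (by linarith : (0:ℝ) < up - c),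
      Real.sign_of_pos (by linarith : (0:ℝ) < um - c),
      Real.sign_of_pos (by linarith : (0:ℝ) < up - uh),
      Real.sign_of_pos (by linarith : (0:ℝ) < um - uh), Pi.one_apply] at hkruz
    nlinarith [hkruz]
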